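/- The axiom set A_CS^≡ is sound and complete for conformance simulation equivalence: for all closed BCCSP processes p, q, p ≡_CS q if and only if the equation p = q is equationally derivable from A_CS^≡. -/
import Mathlib


inductive Proc (A : Type) : Type
  | nil : Proc A
  | pre : A → Proc A → Proc A
  | add : Proc A → Proc A → Proc A

inductive Step {A : Type} : Proc A → A → Proc A → Prop
  | pre (a : A) (p : Proc A) : Step (.pre a p) a p
  | addL {p : Proc A} {a : A} {p' : Proc A} (q : Proc A) :
      Step p a p' → Step (.add p q) a p'
  | addR {q : Proc A} {a : A} {q' : Proc A} (p : Proc A) :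
      Step q a q' → Step (.add p q) a q'

/-- `initials p` is the set `I(p)` of actions that `p` can immediately perform. -/
def initials {A : Type} (p : Proc A) : Set A := {a | ∃ p', Step p a p'}

/-- `{Ar, Al, Abi}` is a partition of the action set `A` (cells may be empty). -/
def IsPartition {A : Type} (Ar Al Abi : Set A) : Prop :=
  (Ar ∪ Al ∪ Abi = Set.univ) ∧ Disjoint Ar Al ∧ Disjoint Ar Abi ∧ Disjoint Al Abi

/-- Covariant-contravariant simulation w.r.t. covariant actions `Ar`,
contravariant actions `Al` and bivariant actions `Abi`. -/
def IsCCSim {A : Type} (Ar Al Abi : Set A) (S : Proc A → Proc A → Prop) : Prop :=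
  ∀ p q, S p q →
    (∀ a ∈ Ar ∪ Abi, ∀ p', Step p a p' → ∃ q', Step q a q' ∧ S p' q') ∧
    (∀ a ∈ Al ∪ Abi, ∀ q', Step q a q' → ∃ p', Step p a p' ∧ S p' q')

/-- The covariant-contravariant simulation preorder `p ≲_CC q`. -/
def ccLe {A : Type} (Ar Al Abi : Set A) (p q : Proc A) : Prop :=
  ∃ S, IsCCSim Ar Al Abi S ∧ S p q

/-- Covariant-contravariant simulation equivalence `p ≡_CC q`. -/
def ccEq {A : Type} (Ar Al Abi : Set A) (p q : Proc A) : Prop :=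
  ccLe Ar Al Abi p q ∧ ccLe Ar Al Abi q p

/-- Conformance simulation. -/
def IsConfSim {A : Type} (R : Proc A → Proc A → Prop) : Prop :=
  ∀ p q, R p q →
    initials p ⊆ initials q ∧
    (∀ a q', Step q a q' → a ∈ initials p → ∃ p', Step p a p' ∧ R p' q')

/-- The conformance simulation preorder `p ≲_CS q`. -/
def csLe {A : Type} (p q : Proc A) : Prop := ∃ R, IsConfSim R ∧ R p q

/-- Conformance simulation equivalence `p ≡_CS q`. -/
def csEq {A : Type} (p q : Proc A) : Prop := csLe p q ∧ csLe q p

/-- The conformance precongruence `p ⊑_CS q`. -/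
def csPre {A : Type} (p q : Proc A) : Prop := csLe p q ∧ initials q ⊆ initials p

/-- Plain simulation. -/
def IsSim {A : Type} (S : Proc A → Proc A → Prop) : Prop :=
  ∀ p q, S p q → ∀ a p', Step p a p' → ∃ q', Step q a q' ∧ S p' q'

/-- The plain simulation preorder `p ≲_S q`. -/
def simLe {A : Type} (p q : Proc A) : Prop := ∃ S, IsSim S ∧ S p q

/-- Ready simulation. -/
def IsRSim {A : Type} (S : Proc A → Proc A → Prop) : Prop :=
  ∀ p q, S p q → initials p = initials q ∧
    (∀ a p', Step p a p' → ∃ q', Step q a q' ∧ S p' q')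

/-- The ready simulation preorder `p ≲_RS q`. -/
def rsLe {A : Type} (p q : Proc A) : Prop := ∃ S, IsRSim S ∧ S p q

/-- Ready conformance simulation: a conformance simulation that additionally
guarantees `I(q) ⊆ I(p)` for all related pairs. -/
def IsRCSim {A : Type} (R : Proc A → Proc A → Prop) : Prop :=
  IsConfSim R ∧ ∀ p q, R p q → initials q ⊆ initials p

/-- The ready conformance simulation preorder `p ≲_RCS q`. -/
def rcsLe {A : Type} (p q : Proc A) : Prop := ∃ R, IsRCSim R ∧ R p q

/-- Open BCCSP terms (with variables indexed by `ℕ`). -/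
inductive Term (A : Type) : Type
  | var : ℕ → Term A
  | nil : Term A
  | pre : A → Term A → Term A
  | add : Term A → Term A → Term A

/-- Closed substitution applied to an open term. -/
def Term.subst {A : Type} (σ : ℕ → Proc A) : Term A → Proc A
  | .var n => σ n
  | .nil => .nil
  | .pre a t => .pre a (t.subst σ)
  | .add s t => .add (s.subst σ) (t.subst σ)

/-- View a closed process as an (open) term. -/
def Proc.toTerm {A : Type} : Proc A → Term A
  | .nil => .nil
  | .pre a p => .pre a p.toTerm
  | .add p q => .add p.toTerm q.toTerm

/-- Inequational derivability (between closed processes) from a set `E` of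
inequations between open terms: the least relation containing all substitution
instances of `E` and closed under reflexivity, transitivity and the congruence
rules for prefixing and `+`. -/
inductive DerivLe {A : Type} (E : Set (Term A × Term A)) : Proc A → Proc A → Prop
  | ax (l r : Term A) (σ : ℕ → Proc A) : (l, r) ∈ E → DerivLe E (l.subst σ) (r.subst σ)
  | refl (p : Proc A) : DerivLe E p p
  | trans {p q r : Proc A} : DerivLe E p q → DerivLe E q r → DerivLe E p r
  | pre (a : A) {p q : Proc A} : DerivLe E p q → DerivLe E (.pre a p) (.pre a q)
  | add {p q r s : Proc A} : DerivLe E p q → DerivLe E r s → DerivLe E (.add p r) (.add q s)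

/-- Equational derivability (between closed processes) from a set `E` of
equations between open terms. -/
inductive DerivEq {A : Type} (E : Set (Term A × Term A)) : Proc A → Proc A → Prop
  | ax (l r : Term A) (σ : ℕ → Proc A) : (l, r) ∈ E → DerivEq E (l.subst σ) (r.subst σ)
  | refl (p : Proc A) : DerivEq E p p
  | symm {p q : Proc A} : DerivEq E p q → DerivEq E q p
  | trans {p q r : Proc A} : DerivEq E p q → DerivEq E q r → DerivEq E p r
  | pre (a : A) {p q : Proc A} : DerivEq E p q → DerivEq E (.pre a p) (.pre a q)
  | add {p q r s : Proc A} : DerivEq E p q → DerivEq E r s → DerivEq E (.add p r) (.add q s)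

/-- Substitution of (possibly open) terms for variables. -/
def Term.substT {A : Type} (σ : ℕ → Term A) : Term A → Term A
  | .var n => σ n
  | .nil => .nil
  | .pre a t => .pre a (t.substT σ)
  | .add s t => .add (s.substT σ) (t.substT σ)

/-- Equational derivability between open terms from a set `E` of equations. -/
inductive TDerivEq {A : Type} (E : Set (Term A × Term A)) : Term A → Term A → Prop
  | ax (l r : Term A) (σ : ℕ → Term A) : (l, r) ∈ E → TDerivEq E (l.substT σ) (r.substT σ)
  | refl (t : Term A) : TDerivEq E t t
  | symm {s t : Term A} : TDerivEq E s t → TDerivEq E t s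
  | trans {s t u : Term A} : TDerivEq E s t → TDerivEq E t u → TDerivEq E s u
  | pre (a : A) {s t : Term A} : TDerivEq E s t → TDerivEq E (.pre a s) (.pre a t)
  | add {s t u v : Term A} : TDerivEq E s t → TDerivEq E u v → TDerivEq E (.add s u) (.add t v)

/-- The bisimulation axioms B1–B4, as equations. -/
def BEqns (A : Type) : Set (Term A × Term A) :=
  { (.add (.var 0) (.var 1), .add (.var 1) (.var 0)),
    (.add (.add (.var 0) (.var 1)) (.var 2), .add (.var 0) (.add (.var 1) (.var 2))),
    (.add (.var 0) (.var 0), .var 0),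
    (.add (.var 0) .nil, .var 0) }

/-- The bisimulation axioms B1–B4, each used as two inequations. -/
def BIneqs (A : Type) : Set (Term A × Term A) := BEqns A ∪ Prod.swap '' BEqns A

/-- The axiom set `A_CS^≡`: B1–B4 together with all closed instances
`a.p = a.p + a.(p + q)` with `I(p) ∩ I(q) = ∅` and all closed instances
`a.(p + q) = a.(p + q) + a.p` with `I(q) ⊆ I(p)`. -/
def ACSEqns (A : Type) : Set (Term A × Term A) :=
  BEqns A ∪
  { e | ∃ (a : A) (p q : Proc A), initials p ∩ initials q = ∅ ∧
        e = ((Proc.pre a p).toTerm,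
             (Proc.add (.pre a p) (.pre a (.add p q))).toTerm) } ∪
  { e | ∃ (a : A) (p q : Proc A), initials q ⊆ initials p ∧
        e = ((Proc.pre a (.add p q)).toTerm,
             (Proc.add (.pre a (.add p q)) (.pre a p)).toTerm) }

section Aux
variable {A : Type}

theorem initials_pre (a : A) (p : Proc A) : initials (Proc.pre a p) = {a} := by
  ext b
  constructor
  · rintro ⟨p', h⟩; cases h; rfl
  · rintro rfl; exact ⟨p, Step.pre _ p⟩

theorem initials_add (p q : Proc A) :
    initials (Proc.add p q) = initials p ∪ initials q := by
  ext b
  constructor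
  · rintro ⟨p', h⟩
    cases h with
    | addL _ h => exact Or.inl ⟨_, h⟩
    | addR _ h => exact Or.inr ⟨_, h⟩
  · rintro (⟨p', h⟩ | ⟨q', h⟩)
    · exact ⟨p', Step.addL _ h⟩
    · exact ⟨q', Step.addR _ h⟩

theorem csLe_unfold {p q : Proc A} (h : csLe p q) :
    initials p ⊆ initials q ∧
      ∀ a q', Step q a q' → a ∈ initials p → ∃ p', Step p a p' ∧ csLe p' q' := by
  obtain ⟨R, hR, hpq⟩ := h
  obtain ⟨h1, h2⟩ := hR p q hpq
  refine ⟨h1, fun a q' hs ha => ?_⟩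
  obtain ⟨p', hp', hR'⟩ := h2 a q' hs ha
  exact ⟨p', hp', R, hR, hR'⟩

theorem isConfSim_csLe : IsConfSim (csLe (A := A)) := fun p q h => csLe_unfold h

theorem csLe_refl (p : Proc A) : csLe p p := by
  refine ⟨Eq, ?_, rfl⟩
  rintro p q rfl
  exact ⟨subset_rfl, fun a q' h _ => ⟨q', h, rfl⟩⟩

theorem csLe_trans {p q r : Proc A} (h1 : csLe p q) (h2 : csLe q r) : csLe p r := by
  refine ⟨fun x z => ∃ y, csLe x y ∧ csLe y z, ?_, q, h1, h2⟩
  rintro x z ⟨y, hxy, hyz⟩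
  obtain ⟨hxyI, hxyS⟩ := csLe_unfold hxy
  obtain ⟨hyzI, hyzS⟩ := csLe_unfold hyz
  refine ⟨hxyI.trans hyzI, fun a z' hz ha => ?_⟩
  obtain ⟨y', hy', hyz'⟩ := hyzS a z' hz (hxyI ha)
  obtain ⟨x', hx', hxy'⟩ := hxyS a y' hy' ha
  exact ⟨x', hx', y', hxy', hyz'⟩

theorem csEq_initials {p q : Proc A} (h : csEq p q) : initials p = initials q :=
  le_antisymm (csLe_unfold h.1).1 (csLe_unfold h.2).1

theorem csEq_refl (p : Proc A) : csEq p p := ⟨csLe_refl p, csLe_refl p⟩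

theorem csEq_symm {p q : Proc A} (h : csEq p q) : csEq q p := ⟨h.2, h.1⟩

theorem csEq_trans {p q r : Proc A} (h1 : csEq p q) (h2 : csEq q r) : csEq p r :=
  ⟨csLe_trans h1.1 h2.1, csLe_trans h2.2 h1.2⟩

theorem csLe_pre {p q : Proc A} (a : A) (h : csLe p q) :
    csLe (Proc.pre a p) (Proc.pre a q) := by
  refine ⟨fun x y => (x = Proc.pre a p ∧ y = Proc.pre a q) ∨ csLe x y, ?_,
    Or.inl ⟨rfl, rfl⟩⟩
  rintro x y (⟨rfl, rfl⟩ | hxy)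
  · rw [initials_pre, initials_pre]
    refine ⟨subset_rfl, fun b q' hs hb => ?_⟩
    cases hs
    exact ⟨p, Step.pre a p, Or.inr h⟩
  · obtain ⟨h1, h2⟩ := csLe_unfold hxy
    refine ⟨h1, fun b y' hs hb => ?_⟩
    obtain ⟨x', hx', hxy'⟩ := h2 b y' hs hb
    exact ⟨x', hx', Or.inr hxy'⟩

theorem csLe_add {p q r s : Proc A} (h1 : csLe p q) (h2 : csLe r s)
    (hqp : initials q ⊆ initials p) (hsr : initials s ⊆ initials r) :
    csLe (Proc.add p r) (Proc.add q s) := by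
  refine ⟨fun x y => (x = Proc.add p r ∧ y = Proc.add q s) ∨ csLe x y, ?_,
    Or.inl ⟨rfl, rfl⟩⟩
  rintro x y (⟨rfl, rfl⟩ | hxy)
  · rw [initials_add, initials_add]
    refine ⟨Set.union_subset_union (csLe_unfold h1).1 (csLe_unfold h2).1,
      fun b y' hs hb => ?_⟩
    cases hs with
    | addL _ hstep =>
      have hbq : b ∈ initials q := ⟨_, hstep⟩
      obtain ⟨p', hp', h'⟩ := (csLe_unfold h1).2 b y' hstep (hqp hbq)
      exact ⟨p', Step.addL _ hp', Or.inr h'⟩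
    | addR _ hstep =>
      have hbs : b ∈ initials s := ⟨_, hstep⟩
      obtain ⟨r', hr', h'⟩ := (csLe_unfold h2).2 b y' hstep (hsr hbs)
      exact ⟨r', Step.addR _ hr', Or.inr h'⟩
  · obtain ⟨ha, hb⟩ := csLe_unfold hxy
    refine ⟨ha, fun b y' hs hb' => ?_⟩
    obtain ⟨x', hx', hxy'⟩ := hb b y' hs hb'
    exact ⟨x', hx', Or.inr hxy'⟩

theorem csEq_pre {p q : Proc A} (a : A) (h : csEq p q) :
    csEq (Proc.pre a p) (Proc.pre a q) :=
  ⟨csLe_pre a h.1, csLe_pre a h.2⟩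

theorem csEq_add {p q r s : Proc A} (h1 : csEq p q) (h2 : csEq r s) :
    csEq (Proc.add p r) (Proc.add q s) :=
  ⟨csLe_add h1.1 h2.1 (csEq_initials h1).ge (csEq_initials h2).ge,
   csLe_add h1.2 h2.2 (csEq_initials h1).le (csEq_initials h2).le⟩

/-- If two processes have exactly the same transitions, they are CS-equivalent. -/
theorem csEq_of_same_steps {p q : Proc A}
    (h : ∀ a t, Step p a t ↔ Step q a t) : csEq p q := by
  have hI : initials p = initials q := by
    ext b; exact ⟨fun ⟨t, ht⟩ => ⟨t, (h b t).1 ht⟩, fun ⟨t, ht⟩ => ⟨t, (h b t).2 ht⟩⟩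
  constructor
  · refine ⟨fun x y => (x = p ∧ y = q) ∨ x = y, ?_, Or.inl ⟨rfl, rfl⟩⟩
    rintro x y (⟨rfl, rfl⟩ | rfl)
    · exact ⟨hI.le, fun a q' hs _ => ⟨q', (h a q').2 hs, Or.inr rfl⟩⟩
    · exact ⟨subset_rfl, fun a q' hs _ => ⟨q', hs, Or.inr rfl⟩⟩
  · refine ⟨fun x y => (x = q ∧ y = p) ∨ x = y, ?_, Or.inl ⟨rfl, rfl⟩⟩
    rintro x y (⟨rfl, rfl⟩ | rfl)
    · exact ⟨hI.ge, fun a q' hs _ => ⟨q', (h a q').1 hs, Or.inr rfl⟩⟩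
    · exact ⟨subset_rfl, fun a q' hs _ => ⟨q', hs, Or.inr rfl⟩⟩

end Aux
section Sound
variable {A : Type}

theorem subst_toTerm (p : Proc A) (σ : ℕ → Proc A) : p.toTerm.subst σ = p := by
  induction p with
  | nil => rfl
  | pre a p ih => simp [Proc.toTerm, Term.subst, ih]
  | add p q ihp ihq => simp [Proc.toTerm, Term.subst, ihp, ihq]

theorem csEq_comm (p q : Proc A) : csEq (Proc.add p q) (Proc.add q p) := by
  apply csEq_of_same_steps
  intro a t
  constructor <;> intro h <;> cases h with
  | addL _ h => exact Step.addR _ h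
  | addR _ h => exact Step.addL _ h

theorem csEq_assoc (p q r : Proc A) :
    csEq (Proc.add (Proc.add p q) r) (Proc.add p (Proc.add q r)) := by
  apply csEq_of_same_steps
  intro a t
  constructor
  · intro h
    cases h with
    | addL _ h =>
      cases h with
      | addL _ h => exact Step.addL _ h
      | addR _ h => exact Step.addR _ (Step.addL _ h)
    | addR _ h => exact Step.addR _ (Step.addR _ h)
  · intro h
    cases h with
    | addL _ h => exact Step.addL _ (Step.addL _ h)
    | addR _ h =>
      cases h with
      | addL _ h => exact Step.addL _ (Step.addR _ h)
      | addR _ h => exact Step.addR _ h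

theorem csEq_idem (p : Proc A) : csEq (Proc.add p p) p := by
  apply csEq_of_same_steps
  intro a t
  constructor
  · intro h
    cases h with
    | addL _ h => exact h
    | addR _ h => exact h
  · intro h; exact Step.addL _ h

theorem csEq_nil (p : Proc A) : csEq (Proc.add p Proc.nil) p := by
  apply csEq_of_same_steps
  intro a t
  constructor
  · intro h
    cases h with
    | addL _ h => exact h
    | addR _ h => cases h
  · intro h; exact Step.addL _ h

theorem csEq_cs1 (a : A) (p q : Proc A) (h : initials p ∩ initials q = ∅) :
    csEq (Proc.pre a p)
      (Proc.add (Proc.pre a p) (Proc.pre a (Proc.add p q))) := by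
  have hq : ∀ b, b ∈ initials p → b ∉ initials q := by
    intro b hbp hbq
    exact absurd (Set.mem_inter hbp hbq) (by rw [h]; exact Set.notMem_empty b)
  constructor
  · refine ⟨fun x y => x = y ∨
      (x = Proc.pre a p ∧ y = Proc.add (Proc.pre a p) (Proc.pre a (Proc.add p q))) ∨
      (x = p ∧ y = Proc.add p q), ?_, Or.inr (Or.inl ⟨rfl, rfl⟩)⟩
    rintro x y (rfl | ⟨rfl, rfl⟩ | ⟨rfl, rfl⟩)
    · exact ⟨subset_rfl, fun b y' hs _ => ⟨y', hs, Or.inl rfl⟩⟩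
    · rw [initials_pre, initials_add, initials_pre, initials_pre]
      refine ⟨by simp, fun b y' hs _ => ?_⟩
      cases hs with
      | addL _ hs => cases hs; exact ⟨p, Step.pre a p, Or.inl rfl⟩
      | addR _ hs => cases hs; exact ⟨p, Step.pre a p, Or.inr (Or.inr ⟨rfl, rfl⟩)⟩
    · rw [initials_add]
      refine ⟨Set.subset_union_left, fun b y' hs hb => ?_⟩
      cases hs with
      | addL _ hs => exact ⟨y', hs, Or.inl rfl⟩
      | addR _ hs => exact absurd ⟨y', hs⟩ (hq b hb)
  · refine ⟨fun x y => x = y ∨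
      (x = Proc.add (Proc.pre a p) (Proc.pre a (Proc.add p q)) ∧ y = Proc.pre a p),
      ?_, Or.inr ⟨rfl, rfl⟩⟩
    rintro x y (rfl | ⟨rfl, rfl⟩)
    · exact ⟨subset_rfl, fun b y' hs _ => ⟨y', hs, Or.inl rfl⟩⟩
    · rw [initials_pre, initials_add, initials_pre, initials_pre]
      refine ⟨by simp, fun b y' hs _ => ?_⟩
      cases hs
      exact ⟨p, Step.addL _ (Step.pre a p), Or.inl rfl⟩

theorem csEq_cs2 (a : A) (p q : Proc A) (h : initials q ⊆ initials p) :
    csEq (Proc.pre a (Proc.add p q))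
      (Proc.add (Proc.pre a (Proc.add p q)) (Proc.pre a p)) := by
  constructor
  · refine ⟨fun x y => x = y ∨
      (x = Proc.pre a (Proc.add p q) ∧
        y = Proc.add (Proc.pre a (Proc.add p q)) (Proc.pre a p)) ∨
      (x = Proc.add p q ∧ y = p), ?_, Or.inr (Or.inl ⟨rfl, rfl⟩)⟩
    rintro x y (rfl | ⟨rfl, rfl⟩ | ⟨rfl, rfl⟩)
    · exact ⟨subset_rfl, fun b y' hs _ => ⟨y', hs, Or.inl rfl⟩⟩
    · rw [initials_pre, initials_add, initials_pre, initials_pre]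
      refine ⟨by simp, fun b y' hs _ => ?_⟩
      cases hs with
      | addL _ hs => cases hs; exact ⟨Proc.add p q, Step.pre _ _, Or.inl rfl⟩
      | addR _ hs => cases hs; exact ⟨Proc.add p q, Step.pre _ _, Or.inr (Or.inr ⟨rfl, rfl⟩)⟩
    · rw [initials_add]
      refine ⟨by intro b hb; rcases hb with hb | hb; exacts [hb, h hb],
        fun b y' hs _ => ?_⟩
      exact ⟨y', Step.addL _ hs, Or.inl rfl⟩
  · refine ⟨fun x y => x = y ∨
      (x = Proc.add (Proc.pre a (Proc.add p q)) (Proc.pre a p) ∧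
        y = Proc.pre a (Proc.add p q)), ?_, Or.inr ⟨rfl, rfl⟩⟩
    rintro x y (rfl | ⟨rfl, rfl⟩)
    · exact ⟨subset_rfl, fun b y' hs _ => ⟨y', hs, Or.inl rfl⟩⟩
    · rw [initials_pre, initials_add, initials_pre, initials_pre]
      refine ⟨by simp, fun b y' hs _ => ?_⟩
      cases hs
      exact ⟨Proc.add p q, Step.addL _ (Step.pre _ _), Or.inl rfl⟩

theorem sound {p q : Proc A} (h : DerivEq (ACSEqns A) p q) : csEq p q := by
  induction h with
  | ax l r σ hmem =>
    rcases hmem with (hB | ⟨a, p', q', hd, he⟩) | ⟨a, p', q', hd, he⟩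
    · simp only [BEqns, Set.mem_insert_iff, Set.mem_singleton_iff] at hB
      rcases hB with h1 | h1 | h1 | h1 <;>
        · rw [Prod.ext_iff] at h1
          obtain ⟨rfl, rfl⟩ := h1
          simp only [Term.subst]
          first
            | exact csEq_comm _ _
            | exact csEq_assoc _ _ _
            | exact csEq_idem _
            | exact csEq_nil _
    · rw [Prod.ext_iff] at he
      obtain ⟨rfl, rfl⟩ := he
      rw [subst_toTerm, subst_toTerm]
      exact csEq_cs1 a p' q' hd
    · rw [Prod.ext_iff] at he
      obtain ⟨rfl, rfl⟩ := he
      rw [subst_toTerm, subst_toTerm]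
      exact csEq_cs2 a p' q' hd
  | refl p => exact csEq_refl p
  | symm _ ih => exact csEq_symm ih
  | trans _ _ ih1 ih2 => exact csEq_trans ih1 ih2
  | pre a _ ih => exact csEq_pre a ih
  | add _ _ ih1 ih2 => exact csEq_add ih1 ih2

end Sound
section Deriv
variable {A : Type}

local notation "D" => DerivEq (ACSEqns A)

theorem mem_B1 : ((Term.add (.var 0) (.var 1) : Term A), Term.add (.var 1) (.var 0))
    ∈ ACSEqns A := Or.inl (Or.inl (by simp [BEqns]))

theorem mem_B2 : ((Term.add (.add (.var 0) (.var 1)) (.var 2) : Term A),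
    Term.add (.var 0) (.add (.var 1) (.var 2))) ∈ ACSEqns A :=
  Or.inl (Or.inl (by simp [BEqns]))

theorem mem_B3 : ((Term.add (.var 0) (.var 0) : Term A), Term.var 0) ∈ ACSEqns A :=
  Or.inl (Or.inl (by simp [BEqns]))

theorem mem_B4 : ((Term.add (.var 0) .nil : Term A), Term.var 0) ∈ ACSEqns A :=
  Or.inl (Or.inl (by simp [BEqns]))

theorem d_comm (p q : Proc A) : D (.add p q) (.add q p) := by
  have := DerivEq.ax _ _ (fun n => if n = 0 then p else q) mem_B1
  simpa [Term.subst] using this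

theorem d_assoc (p q r : Proc A) : D (.add (.add p q) r) (.add p (.add q r)) := by
  have := DerivEq.ax _ _ (fun n => if n = 0 then p else if n = 1 then q else r) mem_B2
  simpa [Term.subst] using this

theorem d_idem (p : Proc A) : D (.add p p) p := by
  have := DerivEq.ax _ _ (fun _ => p) mem_B3
  simpa [Term.subst] using this

theorem d_nil (p : Proc A) : D (.add p .nil) p := by
  have := DerivEq.ax _ _ (fun _ => p) mem_B4
  simpa [Term.subst] using this

theorem d_cs1 (a : A) (p q : Proc A) (h : initials p ∩ initials q = ∅) :
    D (.pre a p) (.add (.pre a p) (.pre a (.add p q))) := by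
  have hm : ((Proc.pre a p).toTerm,
      (Proc.add (.pre a p) (.pre a (.add p q))).toTerm) ∈ ACSEqns A :=
    Or.inl (Or.inr ⟨a, p, q, h, rfl⟩)
  have := DerivEq.ax _ _ (fun _ => Proc.nil) hm
  rwa [subst_toTerm, subst_toTerm] at this

theorem d_cs2 (a : A) (p q : Proc A) (h : initials q ⊆ initials p) :
    D (.pre a (.add p q)) (.add (.pre a (.add p q)) (.pre a p)) := by
  have hm : ((Proc.pre a (.add p q)).toTerm,
      (Proc.add (.pre a (.add p q)) (.pre a p)).toTerm) ∈ ACSEqns A :=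
    Or.inr ⟨a, p, q, h, rfl⟩
  have := DerivEq.ax _ _ (fun _ => Proc.nil) hm
  rwa [subst_toTerm, subst_toTerm] at this

theorem d_addL {p q : Proc A} (r : Proc A) (h : D p q) : D (.add p r) (.add q r) :=
  DerivEq.add h (DerivEq.refl r)

theorem d_addR {p q : Proc A} (r : Proc A) (h : D p q) : D (.add r p) (.add r q) :=
  DerivEq.add (DerivEq.refl r) h

/-- r = r + b.r' whenever r --b--> r'. -/
theorem d_absorb_step {r : Proc A} {b : A} {r' : Proc A} (h : Step r b r') :
    D r (.add r (.pre b r')) := by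
  induction h with
  | pre a p => exact DerivEq.symm (d_idem _)
  | addL q h ih =>
    -- r = p + q, D p (p + b.r')
    refine DerivEq.trans (d_addL q ih) ?_
    -- (p + b.r') + q = (p + q) + b.r'
    refine DerivEq.trans (d_assoc _ _ _) ?_
    refine DerivEq.trans (d_addR _ (d_comm _ _)) ?_
    exact DerivEq.symm (d_assoc _ _ _)
  | addR p h ih =>
    refine DerivEq.trans (d_addR p ih) ?_
    exact DerivEq.symm (d_assoc _ _ _)

/-- If r absorbs every prefix-summand of t, then r absorbs t. -/
theorem d_absorb_all {r : Proc A} (t : Proc A)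
    (h : ∀ b u, Step t b u → D r (.add r (.pre b u))) : D r (.add r t) := by
  induction t with
  | nil => exact DerivEq.symm (d_nil r)
  | pre b u _ => exact h b u (Step.pre b u)
  | add t1 t2 ih1 ih2 =>
    have h1 : D r (.add r t1) := ih1 fun b u hs => h b u (Step.addL _ hs)
    have h2 : D r (.add r t2) := ih2 fun b u hs => h b u (Step.addR _ hs)
    refine DerivEq.trans h1 ?_
    refine DerivEq.trans (d_addL t1 h2) ?_
    refine DerivEq.trans (d_assoc _ _ _) ?_
    exact d_addR _ (d_comm _ _)

end Deriv
section Complete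
variable {A : Type}

local notation "D" => DerivEq (ACSEqns A)

def depth : Proc A → ℕ
  | .nil => 0
  | .pre _ p => depth p + 1
  | .add p q => depth p + depth q

theorem depth_step {p : Proc A} {a : A} {p' : Proc A} (h : Step p a p') :
    depth p' < depth p := by
  induction h with
  | pre a p => simp [depth]
  | addL q _ ih => exact lt_of_lt_of_le ih (Nat.le_add_right _ _)
  | addR p _ ih => exact lt_of_lt_of_le ih (Nat.le_add_left _ _)

open Classical in
noncomputable def pfilter (P : A → Prop) : Proc A → Proc A
  | .nil => .nil
  | .pre a p => if P a then .pre a p else .nil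
  | .add p q => .add (pfilter P p) (pfilter P q)

theorem step_pfilter (P : A → Prop) (s : Proc A) (b : A) (u : Proc A) :
    Step (pfilter P s) b u ↔ P b ∧ Step s b u := by
  induction s with
  | nil =>
    simp only [pfilter]
    constructor
    · intro h; cases h
    · rintro ⟨_, h⟩; cases h
  | pre a p _ =>
    simp only [pfilter]
    by_cases hPa : P a
    · rw [if_pos hPa]
      constructor
      · intro h; cases h; exact ⟨hPa, Step.pre _ _⟩
      · exact fun h => h.2
    · rw [if_neg hPa]
      constructor
      · intro h; cases h
      · rintro ⟨hPb, h⟩; cases h; exact absurd hPb hPa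
  | add p q ihp ihq =>
    simp only [pfilter]
    constructor
    · intro h
      cases h with
      | addL _ h => obtain ⟨h1, h2⟩ := (ihp).1 h; exact ⟨h1, Step.addL _ h2⟩
      | addR _ h => obtain ⟨h1, h2⟩ := (ihq).1 h; exact ⟨h1, Step.addR _ h2⟩
    · rintro ⟨hPb, h⟩
      cases h with
      | addL _ h => exact Step.addL _ ((ihp).2 ⟨hPb, h⟩)
      | addR _ h => exact Step.addR _ ((ihq).2 ⟨hPb, h⟩)

theorem d_medial (a b c d : Proc A) :
    D (.add (.add a b) (.add c d)) (.add (.add a c) (.add b d)) := by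
  refine DerivEq.trans (d_assoc a b (.add c d)) ?_
  refine DerivEq.trans (d_addR a (DerivEq.symm (d_assoc b c d))) ?_
  refine DerivEq.trans (d_addR a (d_addL d (d_comm b c))) ?_
  refine DerivEq.trans (d_addR a (d_assoc c b d)) ?_
  exact DerivEq.symm (d_assoc a c (.add b d))

theorem d_split (P : A → Prop) (s : Proc A) :
    D s (.add (pfilter P s) (pfilter (fun b => ¬ P b) s)) := by
  induction s with
  | nil => exact DerivEq.symm (d_nil _)
  | pre a p _ =>
    simp only [pfilter]
    by_cases hPa : P a
    · rw [if_pos hPa, if_neg (not_not_intro hPa)]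
      exact DerivEq.symm (d_nil _)
    · rw [if_neg hPa, if_pos hPa]
      exact DerivEq.symm (DerivEq.trans (d_comm _ _) (d_nil _))
  | add p q ihp ihq =>
    simp only [pfilter]
    exact DerivEq.trans (DerivEq.add ihp ihq) (d_medial _ _ _ _)

theorem initials_pfilter (P : A → Prop) (s : Proc A) (b : A) :
    b ∈ initials (pfilter P s) ↔ P b ∧ b ∈ initials s := by
  constructor
  · rintro ⟨u, hu⟩
    obtain ⟨h1, h2⟩ := (step_pfilter P s b u).1 hu
    exact ⟨h1, u, h2⟩
  · rintro ⟨h1, u, h2⟩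
    exact ⟨u, (step_pfilter P s b u).2 ⟨h1, h2⟩⟩

/-- Key lemma: if `r ≲_CS s` then `a.r = a.r + a.s` is derivable. -/
theorem d_star : ∀ n (r s : Proc A), depth s ≤ n → csLe r s →
    ∀ a, D (.pre a r) (.add (.pre a r) (.pre a s)) := by
  intro n
  induction n using Nat.strong_induction_on with
  | _ n ih =>
  intro r s hd hrs a
  obtain ⟨hI, hM⟩ := csLe_unfold hrs
  set P : A → Prop := fun b => b ∈ initials r with hP
  set s1 := pfilter P s with hs1
  set s2 := pfilter (fun b => ¬ P b) s with hs2
  set t := Proc.add r s1 with ht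
  have h1 : D r t := by
    apply d_absorb_all
    intro b u hs
    obtain ⟨hPb, hsu⟩ := (step_pfilter P s b u).1 hs
    obtain ⟨r', hr', hle⟩ := hM b u hsu hPb
    have hIH : D (.pre b r') (.add (.pre b r') (.pre b u)) :=
      ih (depth u) (lt_of_lt_of_le (depth_step hsu) hd) r' u le_rfl hle b
    refine DerivEq.trans (d_absorb_step hr') ?_
    refine DerivEq.trans (d_addR r hIH) ?_
    refine DerivEq.trans (DerivEq.symm (d_assoc _ _ _)) ?_
    exact d_addL _ (DerivEq.symm (d_absorb_step hr'))
  have hdisj : initials t ∩ initials s2 = ∅ := by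
    ext b
    simp only [Set.mem_inter_iff, Set.mem_empty_iff_false, iff_false, not_and]
    intro hbt hbs2
    obtain ⟨hnP, _⟩ := (initials_pfilter _ s b).1 hbs2
    rw [ht, initials_add] at hbt
    rcases hbt with hbr | hbs1
    · exact hnP hbr
    · exact hnP ((initials_pfilter P s b).1 hbs1).1
  have hcs1 : D (.pre a t) (.add (.pre a t) (.pre a (.add t s2))) := d_cs1 a t s2 hdisj
  have hts : D (.add t s2) (.add r s) := by
    refine DerivEq.trans (d_assoc r s1 s2) ?_
    exact d_addR r (DerivEq.symm (d_split P s))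
  have hcs2 : D (.pre a (.add r s)) (.add (.pre a (.add r s)) (.pre a s)) := by
    have h := d_cs2 a s r hI
    refine DerivEq.trans (DerivEq.pre a (d_comm r s)) ?_
    refine DerivEq.trans h ?_
    exact d_addL _ (DerivEq.pre a (d_comm s r))
  -- assemble
  have key : D (.pre a r) (.add (.pre a t) (.pre a (.add r s))) := by
    refine DerivEq.trans (DerivEq.pre a h1) ?_
    refine DerivEq.trans hcs1 ?_
    exact d_addR _ (DerivEq.pre a hts)
  refine DerivEq.trans key ?_
  refine DerivEq.trans (d_addR _ hcs2) ?_
  refine DerivEq.trans (DerivEq.symm (d_assoc _ _ _)) ?_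
  apply d_addL
  exact DerivEq.symm (DerivEq.trans (DerivEq.pre a h1) (DerivEq.trans hcs1 (d_addR _ (DerivEq.pre a hts))))

theorem d_absorb_of_csEq {p q : Proc A} (hpq : csLe p q) (hqp : csLe q p) :
    D q (.add q p) := by
  apply d_absorb_all
  intro b u hs
  have hbp : b ∈ initials p := ⟨u, hs⟩
  have hbq : b ∈ initials q := (csLe_unfold hpq).1 hbp
  obtain ⟨q1, hq1, hle⟩ := (csLe_unfold hqp).2 b u hs hbq
  have hst : D (.pre b q1) (.add (.pre b q1) (.pre b u)) :=
    d_star (depth u) q1 u le_rfl hle b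
  refine DerivEq.trans (d_absorb_step hq1) ?_
  refine DerivEq.trans (d_addR q hst) ?_
  refine DerivEq.trans (DerivEq.symm (d_assoc _ _ _)) ?_
  exact d_addL _ (DerivEq.symm (d_absorb_step hq1))

theorem complete {p q : Proc A} (h : csEq p q) : D p q := by
  obtain ⟨hpq, hqp⟩ := h
  have h1 : D q (.add q p) := d_absorb_of_csEq hpq hqp
  have h2 : D p (.add p q) := d_absorb_of_csEq hqp hpq
  exact DerivEq.trans h2 (DerivEq.trans (d_comm p q) (DerivEq.symm h1))

end Complete

/-- `A_CS^≡` is sound and complete for conformance simulation equivalence. -/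
theorem ACSEqns_sound_complete {A : Type} (p q : Proc A) :
    csEq p q ↔ DerivEq (ACSEqns A) p q := by
  exact ⟨fun h => complete h, fun h => sound h⟩
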